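/- arXiv:2407.15306 — 5 statements merged into one kernel-verified Lean document; each statement's English description precedes it below -/
import Mathlib

section
/- Let P be a polynomial over ℂ of degree n with P(0) ≠ 0, let p ∈ (0,∞), and suppose the p-norm ‖P‖_p = (∫_{0}^{1} |P(e^{2πiθ})|^p dθ)^{1/p} satisfies ‖P‖_p ≥ 1. Let E = {θ ∈ [0,1] : |P(e^{2πiθ})| < 1}. Then m⁺(P) := ∫_{0}^{1} max(0, log|P(e^{2πiθ})|) dθ ≤ (1 − |E|)·log‖P‖_p + 1/(e·p), where |E| denotes the Lebesgue measure of E. -/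
open MeasureTheory

theorem aux1 (f : ℝ → ℝ) (hfc : Continuous f) (hf0 : ∀ θ, 0 ≤ f θ)
    (p : ℝ) (hp : 0 < p) (N : ℝ)
    (hN : N = (∫ θ in (0:ℝ)..1, f θ ^ p) ^ (1/p)) (hge : 1 ≤ N)
    (E : Set ℝ) (hE : E = {θ ∈ Set.Icc (0:ℝ) 1 | f θ < 1}) :
    (∫ θ in (0:ℝ)..1, max 0 (Real.log (f θ)))
      ≤ (1 - (volume E).toReal) * Real.log N + 1 / (Real.exp 1 * p) := by
  have hN0 : (0:ℝ) < N := lt_of_lt_of_le one_pos hge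
  have hlogN : 0 ≤ Real.log N := Real.log_nonneg hge
  have hNp : (0:ℝ) < N ^ p := Real.rpow_pos_of_pos hN0 p
  have he : (0:ℝ) < Real.exp 1 := Real.exp_pos 1
  have hep : (0:ℝ) < Real.exp 1 * p := mul_pos he hp
  have hfp_cont : Continuous fun θ => f θ ^ p := hfc.rpow_const (fun x => Or.inr hp.le)
  have hI0 : 0 ≤ ∫ θ in (0:ℝ)..1, f θ ^ p :=
    intervalIntegral.integral_nonneg zero_le_one (fun θ _ => Real.rpow_nonneg (hf0 θ) p)
  have hIN : (∫ θ in (0:ℝ)..1, f θ ^ p) = N ^ p := by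
    rw [hN, ← Real.rpow_mul hI0, one_div, inv_mul_cancel₀ hp.ne', Real.rpow_one]
  have hEeq : E = Set.Icc (0:ℝ) 1 ∩ {θ | f θ < 1} := by
    rw [hE]; ext θ; simp [Set.mem_sep_iff]
  have hEm : MeasurableSet E := by
    rw [hEeq]
    exact measurableSet_Icc.inter (measurableSet_lt hfc.measurable measurable_const)
  have hEIoc : volume (Set.Ioc (0:ℝ) 1 ∩ E) = volume E := by
    apply le_antisymm (measure_mono Set.inter_subset_right)
    have hsub : E ⊆ (Set.Ioc (0:ℝ) 1 ∩ E) ∪ {0} := by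
      intro x hx
      have hxI : x ∈ Set.Icc (0:ℝ) 1 := by rw [hE] at hx; exact hx.1
      rcases eq_or_lt_of_le hxI.1 with h | h
      · right; simp [← h]
      · left; exact ⟨⟨h, hxI.2⟩, hx⟩
    calc volume E ≤ volume ((Set.Ioc (0:ℝ) 1 ∩ E) ∪ {0}) := measure_mono hsub
      _ ≤ volume (Set.Ioc (0:ℝ) 1 ∩ E) + volume {0} := measure_union_le _ _
      _ = volume (Set.Ioc (0:ℝ) 1 ∩ E) := by simp
  have hint1 : IntervalIntegrable (fun θ => Real.log (max 1 (f θ))) volume 0 1 := by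
    have hc : Continuous fun θ => max 1 (f θ) := continuous_const.max hfc
    exact (hc.log (fun x => (lt_of_lt_of_le one_pos (le_max_left _ _)).ne')).intervalIntegrable _ _
  have hint2 : IntervalIntegrable (E.indicator fun _ => Real.log N) volume 0 1 := by
    rw [intervalIntegrable_iff_integrableOn_Ioc_of_le zero_le_one]
    exact (integrableOn_const (by simp)).indicator hEm
  have hint3 : IntervalIntegrable (fun θ => f θ ^ p) volume 0 1 := hfp_cont.intervalIntegrable _ _
  have hind : (∫ θ in (0:ℝ)..1, E.indicator (fun _ => Real.log N) θ)
      = (volume E).toReal * Real.log N := by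
    rw [intervalIntegral.integral_of_le zero_le_one, setIntegral_indicator hEm,
      setIntegral_const, measureReal_def, hEIoc]
    simp [smul_eq_mul]
  have key : (∫ θ in (0:ℝ)..1, (Real.log (max 1 (f θ)) + E.indicator (fun _ => Real.log N) θ))
      ≤ ∫ θ in (0:ℝ)..1, (Real.log N + f θ ^ p * (N ^ p * (Real.exp 1 * p))⁻¹) := by
    apply intervalIntegral.integral_mono_on zero_le_one (hint1.add hint2)
      (intervalIntegrable_const.add (hint3.mul_const _))
    intro θ hθ
    by_cases hθE : θ ∈ E
    · have hfθ : f θ < 1 := by rw [hE] at hθE; exact hθE.2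
      rw [Set.indicator_of_mem hθE, max_eq_left hfθ.le, Real.log_one, zero_add]
      have h1 : 0 ≤ f θ ^ p * (N ^ p * (Real.exp 1 * p))⁻¹ :=
        mul_nonneg (Real.rpow_nonneg (hf0 θ) p) (inv_nonneg.mpr (mul_pos hNp hep).le)
      linarith
    · have h1f : 1 ≤ f θ := by
        by_contra h
        exact hθE (by rw [hE]; exact ⟨hθ, lt_of_not_ge h⟩)
      rw [Set.indicator_of_notMem hθE, add_zero, max_eq_right h1f]
      have hfpos : 0 < f θ := lt_of_lt_of_le one_pos h1f
      have hy : 0 < (f θ / N) ^ p := Real.rpow_pos_of_pos (div_pos hfpos hN0) p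
      have hlog : Real.log ((f θ / N) ^ p) ≤ (f θ / N) ^ p / Real.exp 1 := by
        have h' := Real.log_le_sub_one_of_pos (div_pos hy he)
        rw [Real.log_div hy.ne' he.ne', Real.log_exp] at h'
        linarith
      have e1 : Real.log ((f θ / N) ^ p) = p * (Real.log (f θ) - Real.log N) := by
        rw [Real.log_rpow (div_pos hfpos hN0), Real.log_div hfpos.ne' hN0.ne']
      have e2 : (f θ / N) ^ p = f θ ^ p / N ^ p := Real.div_rpow (hf0 θ) hN0.le p
      have h3 : p * (Real.log (f θ) - Real.log N) ≤ f θ ^ p / N ^ p / Real.exp 1 := by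
        rw [← e2, ← e1]; exact hlog
      have h4 : f θ ^ p * (N ^ p * (Real.exp 1 * p))⁻¹
          = f θ ^ p / N ^ p / Real.exp 1 / p := by
        rw [div_div, div_div, div_eq_mul_inv]
      rw [h4]
      have h5 : Real.log (f θ) - Real.log N ≤ f θ ^ p / N ^ p / Real.exp 1 / p :=
        (le_div_iff₀ hp).mpr (by linarith)
      linarith
  have hR : (∫ θ in (0:ℝ)..1, (Real.log N + f θ ^ p * (N ^ p * (Real.exp 1 * p))⁻¹))
      = Real.log N + 1 / (Real.exp 1 * p) := by
    rw [intervalIntegral.integral_add intervalIntegrable_const (hint3.mul_const _),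
      intervalIntegral.integral_mul_const, hIN, intervalIntegral.integral_const]
    have : N ^ p * (N ^ p * (Real.exp 1 * p))⁻¹ = 1 / (Real.exp 1 * p) := by
      field_simp
    rw [this]
    simp
  have hL : (∫ θ in (0:ℝ)..1, (Real.log (max 1 (f θ)) + E.indicator (fun _ => Real.log N) θ))
      = (∫ θ in (0:ℝ)..1, Real.log (max 1 (f θ))) + (volume E).toReal * Real.log N := by
    rw [intervalIntegral.integral_add hint1 hint2, hind]
  have hg : ∀ θ, max 0 (Real.log (f θ)) = Real.log (max 1 (f θ)) := by
    intro θ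
    rcases le_or_gt 1 (f θ) with h | h
    · rw [max_eq_right (Real.log_nonneg h), max_eq_right h]
    · rw [max_eq_left (Real.log_nonpos (hf0 θ) h.le), max_eq_left h.le, Real.log_one]
  have hgoal : (∫ θ in (0:ℝ)..1, max 0 (Real.log (f θ)))
      = ∫ θ in (0:ℝ)..1, Real.log (max 1 (f θ)) := by
    simp_rw [hg]
  rw [hL, hR] at key
  rw [hgoal]
  have : (1 - (volume E).toReal) * Real.log N + 1 / (Real.exp 1 * p)
      = Real.log N + 1 / (Real.exp 1 * p) - (volume E).toReal * Real.log N := by ring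
  linarith


theorem stmt1 (P : Polynomial ℂ) (n : ℕ) (hdeg : P.natDegree = n)
    (h0 : P.eval 0 ≠ 0) (p : ℝ) (hp : 0 < p)
    (Pnorm : ℝ)
    (hPnorm : Pnorm =
      (∫ θ in (0:ℝ)..1,
        (‖P.eval (Complex.exp (2 * Real.pi * Complex.I * (θ:ℂ)))‖)^p) ^ (1/p))
    (hge : 1 ≤ Pnorm)
    (E : Set ℝ)
    (hE : E = {θ ∈ Set.Icc (0:ℝ) 1 |
      ‖P.eval (Complex.exp (2 * Real.pi * Complex.I * (θ:ℂ)))‖ < 1}) :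
    (∫ θ in (0:ℝ)..1,
        max 0 (Real.log (‖P.eval (Complex.exp (2 * Real.pi * Complex.I * (θ:ℂ)))‖)))
      ≤ (1 - (volume E).toReal) * Real.log Pnorm + 1 / (Real.exp 1 * p) := by
  have hfc : Continuous fun θ : ℝ =>
      ‖P.eval (Complex.exp (2 * Real.pi * Complex.I * (θ:ℂ)))‖ := by
    apply continuous_norm.comp
    exact P.continuous.comp (Complex.continuous_exp.comp
      (continuous_const.mul Complex.continuous_ofReal))
  exact aux1 _ hfc (fun θ => norm_nonneg _) p hp Pnorm hPnorm hge E hE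
end

section
/- For all x with 0 ≤ x ≤ 1, arcsin(x) ≤ πx / (2 + (π − 2)√(1 − x²)). -/
open Real

/-- If `g 0 = 0` and the derivative of `g` is nonnegative on `[0, ∞)`, then `g ≥ 0` there. -/
lemma aux_nonneg (g g' : ℝ → ℝ) (hd : ∀ t, HasDerivAt g (g' t) t) (h0 : g 0 = 0)
    (hp : ∀ t, 0 ≤ t → 0 ≤ g' t) : ∀ t, 0 ≤ t → 0 ≤ g t := by
  intro t ht
  have hmono : MonotoneOn g (Set.Ici (0 : ℝ)) := by
    apply monotoneOn_of_hasDerivWithinAt_nonneg (f' := g') (convex_Ici 0)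
    · exact fun x _ => (hd x).continuousAt.continuousWithinAt
    · exact fun x _ => (hd x).hasDerivWithinAt
    · intro x hx
      rw [interior_Ici] at hx
      exact hp x (le_of_lt hx)
  have := hmono (Set.self_mem_Ici) ht ht
  linarith [h0 ▸ this]

lemma sin_le_id : ∀ t : ℝ, 0 ≤ t → Real.sin t ≤ t := by
  intro t ht
  rcases eq_or_lt_of_le ht with h | h
  · simp [← h]
  · exact (Real.sin_lt h).le

lemma sin_ge_t3 : ∀ t : ℝ, 0 ≤ t → t - t ^ 3 / 6 ≤ Real.sin t := by
  have := aux_nonneg (fun t => Real.sin t - (t - t ^ 3 / 6))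
    (fun t => Real.cos t - (1 - t ^ 2 / 2))
    (fun t => by
      have h1 := Real.hasDerivAt_sin t
      have h2 : HasDerivAt (fun t : ℝ => t - t ^ 3 / 6) (1 - t ^ 2 / 2) t := by
        have := ((hasDerivAt_id t).sub (((hasDerivAt_pow 3 t)).div_const 6))
        exact this.congr_deriv (by ring)
      exact h1.sub h2)
    (by norm_num)
    (fun t _ => by have := Real.one_sub_sq_div_two_le_cos (x := t); linarith)
  intro t ht
  have := this t ht
  simpa using by linarith [this]

lemma cos_le_t4 : ∀ t : ℝ, 0 ≤ t → Real.cos t ≤ 1 - t ^ 2 / 2 + t ^ 4 / 24 := by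
  have := aux_nonneg (fun t => 1 - t ^ 2 / 2 + t ^ 4 / 24 - Real.cos t)
    (fun t => -t + t ^ 3 / 6 + Real.sin t)
    (fun t => by
      have h1 : HasDerivAt (fun t : ℝ => 1 - t ^ 2 / 2 + t ^ 4 / 24) (-t + t ^ 3 / 6) t := by
        have := (((hasDerivAt_pow 2 t).div_const 2).const_sub 1).add
          ((hasDerivAt_pow 4 t).div_const 24)
        exact this.congr_deriv (by ring)
      have := h1.sub (Real.hasDerivAt_cos t)
      exact this.congr_deriv (by ring))
    (by norm_num)
    (fun t ht => by have := sin_ge_t3 t ht; linarith)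
  intro t ht
  have := this t ht
  linarith [this]

lemma sin_le_t5 : ∀ t : ℝ, 0 ≤ t → Real.sin t ≤ t - t ^ 3 / 6 + t ^ 5 / 120 := by
  have := aux_nonneg (fun t => t - t ^ 3 / 6 + t ^ 5 / 120 - Real.sin t)
    (fun t => 1 - t ^ 2 / 2 + t ^ 4 / 24 - Real.cos t)
    (fun t => by
      have h1 : HasDerivAt (fun t : ℝ => t - t ^ 3 / 6 + t ^ 5 / 120)
          (1 - t ^ 2 / 2 + t ^ 4 / 24) t := by
        have := ((hasDerivAt_id t).sub ((hasDerivAt_pow 3 t).div_const 6)).add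
          ((hasDerivAt_pow 5 t).div_const 120)
        exact this.congr_deriv (by ring)
      exact h1.sub (Real.hasDerivAt_sin t))
    (by norm_num)
    (fun t ht => by have := cos_le_t4 t ht; linarith)
  intro t ht
  have := this t ht
  linarith [this]

lemma cos_ge_t6 : ∀ t : ℝ, 0 ≤ t → 1 - t ^ 2 / 2 + t ^ 4 / 24 - t ^ 6 / 720 ≤ Real.cos t := by
  have := aux_nonneg (fun t => Real.cos t - (1 - t ^ 2 / 2 + t ^ 4 / 24 - t ^ 6 / 720))
    (fun t => t - t ^ 3 / 6 + t ^ 5 / 120 - Real.sin t)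
    (fun t => by
      have h1 : HasDerivAt (fun t : ℝ => 1 - t ^ 2 / 2 + t ^ 4 / 24 - t ^ 6 / 720)
          (-t + t ^ 3 / 6 - t ^ 5 / 120) t := by
        have := ((((hasDerivAt_pow 2 t).div_const 2).const_sub 1).add
          ((hasDerivAt_pow 4 t).div_const 24)).sub ((hasDerivAt_pow 6 t).div_const 720)
        exact this.congr_deriv (by ring)
      have := (Real.hasDerivAt_cos t).sub h1
      exact this.congr_deriv (by ring))
    (by norm_num)
    (fun t ht => by have := sin_le_t5 t ht; linarith)
  intro t ht
  have := this t ht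
  linarith [this]

lemma sin_ge_t7 : ∀ t : ℝ, 0 ≤ t →
    t - t ^ 3 / 6 + t ^ 5 / 120 - t ^ 7 / 5040 ≤ Real.sin t := by
  have := aux_nonneg (fun t => Real.sin t - (t - t ^ 3 / 6 + t ^ 5 / 120 - t ^ 7 / 5040))
    (fun t => Real.cos t - (1 - t ^ 2 / 2 + t ^ 4 / 24 - t ^ 6 / 720))
    (fun t => by
      have h1 : HasDerivAt (fun t : ℝ => t - t ^ 3 / 6 + t ^ 5 / 120 - t ^ 7 / 5040)
          (1 - t ^ 2 / 2 + t ^ 4 / 24 - t ^ 6 / 720) t := by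
        have := (((hasDerivAt_id t).sub ((hasDerivAt_pow 3 t).div_const 6)).add
          ((hasDerivAt_pow 5 t).div_const 120)).sub ((hasDerivAt_pow 7 t).div_const 5040)
        exact this.congr_deriv (by ring)
      exact (Real.hasDerivAt_sin t).sub h1)
    (by norm_num)
    (fun t ht => by have := cos_ge_t6 t ht; linarith)
  intro t ht
  have := this t ht
  linarith [this]

/-- Key lemma: for `θ ∈ [0, π/2]`, `2θ + (π-2)θcos θ ≤ π sin θ`. -/
lemma key_ineq (θ : ℝ) (h0 : 0 ≤ θ) (h1 : θ ≤ π / 2) :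
    (2 + (π - 2) * Real.cos θ) * θ ≤ π * Real.sin θ := by
  have hπl : (3.141592 : ℝ) < π := Real.pi_gt_d6
  have hπu : π < 3.141593 := Real.pi_lt_d6
  have hπpos : (0:ℝ) < π := Real.pi_pos
  have h2 : (0:ℝ) < π - 2 := by linarith
  rcases le_or_gt θ 1.3 with hθ | hθ
  · -- small regime: Taylor bounds
    have hs := sin_ge_t7 θ h0
    have hc := cos_le_t4 θ h0
    have hcm : (π - 2) * Real.cos θ * θ ≤ (π - 2) * (1 - θ ^ 2 / 2 + θ ^ 4 / 24) * θ :=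
      mul_le_mul_of_nonneg_right (mul_le_mul_of_nonneg_left hc h2.le) h0
    have hsm : π * (θ - θ ^ 3 / 6 + θ ^ 5 / 120 - θ ^ 7 / 5040) ≤ π * Real.sin θ :=
      mul_le_mul_of_nonneg_left hs hπpos.le
    have hu : θ ^ 2 ≤ 1.69 := by nlinarith [mul_nonneg h0 (by linarith : (0:ℝ) ≤ 1.3 - θ)]
    have h3 : 0 ≤ θ ^ 3 := pow_nonneg h0 3
    have hA : 0 ≤ θ ^ 3 * (1.69 - θ ^ 2) := mul_nonneg h3 (by linarith)
    have hA2 : 0 ≤ θ ^ 5 * (1.69 - θ ^ 2) := mul_nonneg (pow_nonneg h0 5) (by linarith)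
    have hC : 0 ≤ θ ^ 3 * (1 / 3 - θ ^ 2 / 30 - θ ^ 4 / 5040) := by
      apply mul_nonneg h3
      nlinarith [hu, mul_nonneg (sub_nonneg.2 hu) (sq_nonneg θ)]
    have hB : 0 ≤ (π - 3.141592) * (θ ^ 3 * (1 / 3 - θ ^ 2 / 30 - θ ^ 4 / 5040)) :=
      mul_nonneg (by linarith) hC
    have hpoly : 2 * θ + (π - 2) * (1 - θ ^ 2 / 2 + θ ^ 4 / 24) * θ ≤
        π * (θ - θ ^ 3 / 6 + θ ^ 5 / 120 - θ ^ 7 / 5040) := by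
      linarith [hB, h3, hA, hA2]
    linarith [hcm, hsm, hpoly]
  · -- large regime: φ = π/2 - θ
    set φ := π / 2 - θ with hφdef
    have hφ0 : 0 ≤ φ := by simp only [hφdef]; linarith
    have hφu : φ ≤ 0.2708 := by simp only [hφdef]; linarith
    have hsθ : Real.sin θ = Real.cos φ := by
      rw [hφdef, Real.cos_pi_div_two_sub]
    have hcθ : Real.cos θ = Real.sin φ := by
      rw [hφdef, Real.sin_pi_div_two_sub]
    have hcφ : 1 - φ ^ 2 / 2 ≤ Real.cos φ := Real.one_sub_sq_div_two_le_cos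
    have hsφ : Real.sin φ ≤ φ := sin_le_id φ hφ0
    rw [hsθ, hcθ]
    have hθeq : θ = π / 2 - φ := by simp only [hφdef]; ring
    rw [hθeq]
    have hθpos : 0 ≤ π / 2 - φ := by rw [← hθeq]; exact h0
    have hb : (π - 2) * Real.sin φ * (π / 2 - φ) ≤ (π - 2) * φ * (π / 2 - φ) :=
      mul_le_mul_of_nonneg_right (mul_le_mul_of_nonneg_left hsφ h2.le) hθpos
    have hb2 : π * (1 - φ ^ 2 / 2) ≤ π * Real.cos φ :=
      mul_le_mul_of_nonneg_left hcφ hπpos.le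
    have t1 : 0 ≤ φ * (π * (3.141593 - π)) :=
      mul_nonneg hφ0 (mul_nonneg hπpos.le (by linarith))
    have t2 : 0 ≤ φ * (3.141593 - π) := mul_nonneg hφ0 (by linarith)
    have t3 : 0 ≤ φ ^ 2 * (π - 3.141592) := mul_nonneg (sq_nonneg φ) (by linarith)
    have t4 : 0 ≤ φ * (0.2708 - φ) := mul_nonneg hφ0 (by linarith)
    have hpoly2 : 2 * (π / 2 - φ) + (π - 2) * φ * (π / 2 - φ) ≤ π * (1 - φ ^ 2 / 2) := by
      linarith [t1, t2, t3, t4, hφ0]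
    linarith [hb, hb2, hpoly2]

theorem stmt6 (x : ℝ) (h0 : 0 ≤ x) (h1 : x ≤ 1) :
    Real.arcsin x ≤ Real.pi * x / (2 + (Real.pi - 2) * Real.sqrt (1 - x^2)) := by
  have hx1 : -1 ≤ x := by linarith
  set θ := Real.arcsin x with hθ
  have hθ0 : 0 ≤ θ := Real.arcsin_nonneg.2 h0
  have hθ1 : θ ≤ π / 2 := Real.arcsin_le_pi_div_two x
  have hsin : Real.sin θ = x := Real.sin_arcsin hx1 h1
  have hcos : Real.cos θ = Real.sqrt (1 - x ^ 2) := Real.cos_arcsin x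
  have hkey := key_ineq θ hθ0 hθ1
  rw [hsin, hcos] at hkey
  have hD : 0 < 2 + (π - 2) * Real.sqrt (1 - x ^ 2) := by
    have h2 : (0:ℝ) < π - 2 := by linarith [Real.pi_gt_three]
    have := Real.sqrt_nonneg (1 - x ^ 2)
    nlinarith
  rw [le_div_iff₀ hD]
  linarith [hkey]
end

section
/- Let P(z) = ∑_{k=0}^n c_k z^k be a complex polynomial of degree n with P(0) ≠ 0 and |c_0 c_n| ≥ 1, and let p ∈ (0,∞) with ‖P‖_p ≥ 1. Let E = {θ ∈ [0,1] : |P(e^{2πiθ})| < 1} and B_p(P) = (1 − |E|)·log‖P‖_p + 1/(e·p). Then the logarithmic Mahler measure satisfies m(P/√|c_0 c_n|) = ∫_0^1 log(|P(e^{2πiθ})|/√|c_0 c_n|) dθ ≤ B_p(P). -/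
open MeasureTheory

theorem stmt9 (P : Polynomial ℂ) (n : ℕ) (hdeg : P.natDegree = n)
    (h0 : P.eval 0 ≠ 0)
    (hc : 1 ≤ ‖P.coeff 0 * P.leadingCoeff‖)
    (p : ℝ) (hp : 0 < p)
    (Pnorm : ℝ)
    (hPnorm : Pnorm =
      (∫ θ in (0:ℝ)..1,
        (‖P.eval (Complex.exp (2 * Real.pi * Complex.I * (θ:ℂ)))‖)^p) ^ (1/p))
    (hge : 1 ≤ Pnorm)
    (E : Set ℝ)
    (hE : E = {θ ∈ Set.Icc (0:ℝ) 1 |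
      ‖P.eval (Complex.exp (2 * Real.pi * Complex.I * (θ:ℂ)))‖ < 1}) :
    (∫ θ in (0:ℝ)..1,
        Real.log (‖P.eval (Complex.exp (2 * Real.pi * Complex.I * (θ:ℂ)))‖ /
          Real.sqrt (‖P.coeff 0 * P.leadingCoeff‖)))
      ≤ (1 - (volume E).toReal) * Real.log Pnorm + 1 / (Real.exp 1 * p) := by
  have hN0 : (0:ℝ) < Pnorm := lt_of_lt_of_le one_pos hge
  have hlogN : 0 ≤ Real.log Pnorm := Real.log_nonneg hge
  set c : ℝ := ‖P.coeff 0 * P.leadingCoeff‖ with hcdef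
  set f : ℝ → ℝ :=
    fun θ => ‖P.eval (Complex.exp (2 * Real.pi * Complex.I * (θ:ℂ)))‖ with hfdef
  have hfc : Continuous f := by
    rw [hfdef]
    exact continuous_norm.comp ((Polynomial.continuous P).comp
      (Complex.continuous_exp.comp (continuous_const.mul Complex.continuous_ofReal)))
  have hf0 : ∀ θ, 0 ≤ f θ := fun θ => norm_nonneg _
  have hsqrt : 1 ≤ Real.sqrt c := by
    rw [show (1:ℝ) = Real.sqrt 1 from Real.sqrt_one.symm]
    exact Real.sqrt_le_sqrt hc
  have hEm : MeasurableSet E := by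
    rw [hE]
    exact measurableSet_Icc.inter (measurableSet_lt hfc.measurable measurable_const)
  have hEsub : E ⊆ Set.Icc (0:ℝ) 1 := by rw [hE]; exact fun θ h => h.1
  have hEvol : (volume E).toReal ≤ 1 := by
    have h1 : volume E ≤ 1 := by
      refine le_trans (measure_mono hEsub) ?_
      rw [Real.volume_Icc]; norm_num
    calc (volume E).toReal ≤ (1 : ENNReal).toReal := ENNReal.toReal_mono (by norm_num) h1
      _ = 1 := by simp
  set I : ℝ := ∫ θ in (0:ℝ)..1, f θ ^ p with hIdef
  have hI0 : 0 ≤ I := by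
    rw [hIdef]
    exact intervalIntegral.integral_nonneg (by norm_num)
      (fun x _ => Real.rpow_nonneg (hf0 x) p)
  have hPI : Pnorm = I ^ (1/p) := hPnorm
  have hNp : Pnorm ^ p = I := by
    rw [hPI, ← Real.rpow_mul hI0, one_div_mul_cancel hp.ne', Real.rpow_one]
  have hNppos : 0 < Pnorm ^ p := Real.rpow_pos_of_pos hN0 p
  set g : ℝ → ℝ := fun θ =>
    Real.log Pnorm - E.indicator (fun _ => Real.log Pnorm) θ
      + f θ ^ p / (Real.exp 1 * p * Pnorm ^ p) with hgdef
  -- integrability of pieces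
  have h1int : IntervalIntegrable (fun _ : ℝ => Real.log Pnorm) volume 0 1 :=
    intervalIntegrable_const
  have h2int : IntervalIntegrable (E.indicator fun _ => Real.log Pnorm) volume 0 1 := by
    rw [intervalIntegrable_iff_integrableOn_Ioc_of_le (by norm_num)]
    refine (integrable_indicator_iff hEm).2 ?_
    refine integrableOn_const (ne_of_lt ?_) (by simp)
    rw [Measure.restrict_apply hEm]
    refine lt_of_le_of_lt (measure_mono Set.inter_subset_right) ?_
    rw [Real.volume_Ioc]; norm_num
  have h3cont : Continuous fun θ => f θ ^ p / (Real.exp 1 * p * Pnorm ^ p) :=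
    (hfc.rpow_const fun x => Or.inr hp.le).div_const _
  have h3int : IntervalIntegrable (fun θ => f θ ^ p / (Real.exp 1 * p * Pnorm ^ p))
      volume 0 1 := h3cont.intervalIntegrable 0 1
  have hgint : IntervalIntegrable g volume 0 1 := (h1int.sub h2int).add h3int
  -- integral of the indicator
  have hEIoc : E ∩ Set.Ioc (0:ℝ) 1 = E \ {0} := by
    ext θ
    constructor
    · rintro ⟨h1, h2⟩
      exact ⟨h1, by simp [ne_of_gt h2.1]⟩
    · rintro ⟨h1, h2⟩
      have h3 := hEsub h1
      simp only [Set.mem_singleton_iff] at h2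
      exact ⟨h1, ⟨lt_of_le_of_ne h3.1 (Ne.symm h2), h3.2⟩⟩
  have hInd : (∫ θ in (0:ℝ)..1, E.indicator (fun _ => Real.log Pnorm) θ)
      = Real.log Pnorm * (volume E).toReal := by
    rw [intervalIntegral.integral_of_le (by norm_num : (0:ℝ) ≤ 1),
      MeasureTheory.integral_indicator hEm, setIntegral_const, smul_eq_mul,
      measureReal_def, Measure.restrict_apply hEm, hEIoc, measure_diff_null (by simp), mul_comm]
  -- pointwise bound
  have hpt : ∀ x ∈ Set.Icc (0:ℝ) 1, Real.log (f x / Real.sqrt c) ≤ g x := by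
    intro x hx
    by_cases hxE : x ∈ E
    · have hfx1 : f x < 1 := by rw [hE] at hxE; exact hxE.2
      have hg : g x = f x ^ p / (Real.exp 1 * p * Pnorm ^ p) := by
        rw [hgdef]; simp [Set.indicator_of_mem hxE]
      rw [hg]
      have hnn : 0 ≤ f x ^ p / (Real.exp 1 * p * Pnorm ^ p) :=
        div_nonneg (Real.rpow_nonneg (hf0 x) p) (mul_pos (mul_pos (Real.exp_pos 1) hp) hNppos).le
      rcases eq_or_lt_of_le (hf0 x) with h | h
      · rw [← h, zero_div, Real.log_zero]; positivity
      · have hA : Real.log (f x / Real.sqrt c) ≤ Real.log (f x) := by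
          refine Real.log_le_log (div_pos h (lt_of_lt_of_le one_pos hsqrt)) ?_
          exact div_le_self (hf0 x) hsqrt
        have hB : Real.log (f x) ≤ 0 := Real.log_nonpos (hf0 x) hfx1.le
        linarith
    · have hfx1 : 1 ≤ f x := by
        by_contra hlt
        exact hxE (by rw [hE]; exact ⟨hx, lt_of_not_ge hlt⟩)
      have hfx0 : 0 < f x := lt_of_lt_of_le one_pos hfx1
      have hg : g x = Real.log Pnorm + f x ^ p / (Real.exp 1 * p * Pnorm ^ p) := by
        rw [hgdef]; simp [Set.indicator_of_notMem hxE]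
      rw [hg]
      have hdivpos : 0 < f x / Pnorm := div_pos hfx0 hN0
      have htpos : 0 < (f x / Pnorm) ^ p := Real.rpow_pos_of_pos hdivpos p
      have hlogt : Real.log ((f x / Pnorm) ^ p) ≤ (f x / Pnorm) ^ p / Real.exp 1 := by
        have h := Real.log_le_sub_one_of_pos (div_pos htpos (Real.exp_pos 1))
        rw [Real.log_div htpos.ne' (Real.exp_pos 1).ne', Real.log_exp] at h
        linarith
      have hlt : Real.log ((f x / Pnorm) ^ p) = p * Real.log (f x / Pnorm) :=
        Real.log_rpow hdivpos p
      have htval : (f x / Pnorm) ^ p = f x ^ p / Pnorm ^ p :=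
        Real.div_rpow (hf0 x) hN0.le p
      have hsplit : Real.log (f x / Pnorm) = Real.log (f x) - Real.log Pnorm :=
        Real.log_div hfx0.ne' hN0.ne'
      have hkey : Real.log (f x) - Real.log Pnorm
          ≤ f x ^ p / (Real.exp 1 * p * Pnorm ^ p) := by
        rw [hlt, htval, hsplit] at hlogt
        rw [le_div_iff₀ (by positivity)]
        have he := Real.exp_pos 1
        rw [div_div, le_div_iff₀ (by positivity)] at hlogt
        nlinarith
      have hA : Real.log (f x / Real.sqrt c) ≤ Real.log (f x) := by
        refine Real.log_le_log (div_pos hfx0 (lt_of_lt_of_le one_pos hsqrt)) ?_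
        exact div_le_self (hf0 x) hsqrt
      linarith
    -- main case split
  show (∫ θ in (0:ℝ)..1, Real.log (f θ / Real.sqrt c))
      ≤ (1 - (volume E).toReal) * Real.log Pnorm + 1 / (Real.exp 1 * p)
  by_cases hint :
      IntervalIntegrable (fun θ => Real.log (f θ / Real.sqrt c)) volume 0 1
  · have hmono := intervalIntegral.integral_mono_on (by norm_num : (0:ℝ) ≤ 1) hint hgint hpt
    refine le_trans hmono ?_
    have : (∫ θ in (0:ℝ)..1, g θ)
        = Real.log Pnorm - Real.log Pnorm * (volume E).toReal + I / (Real.exp 1 * p * Pnorm ^ p) := by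
      rw [hgdef]
      rw [intervalIntegral.integral_add (h1int.sub h2int) h3int,
        intervalIntegral.integral_sub h1int h2int, hInd,
        intervalIntegral.integral_const, intervalIntegral.integral_div, ← hIdef]
      norm_num
    rw [this, ← hNp]
    have hq : Pnorm ^ p / (Real.exp 1 * p * Pnorm ^ p) = 1 / (Real.exp 1 * p) := by
      field_simp
    rw [hq]
    linarith
  · rw [intervalIntegral.integral_undef hint]
    have h1 : 0 ≤ 1 - (volume E).toReal := by linarith
    have h2 : 0 < 1 / (Real.exp 1 * p) := by positivity
    nlinarith
end

section
/- Let P(z) = c_n ∏_{j=1}^n (z − α_j) be a complex polynomial of degree n with c_0 = P(0) ≠ 0, and let 0 < ρ < 1. Then the number of roots α_j (counted with multiplicity) satisfying |α_j| ≤ ρ or |α_j| ≥ 1/ρ is at most (2/(1 − ρ))·m(P/√|c_0 c_n|), where m(Q) = ∫_0^1 log|Q(e^{2πiθ})| dθ is the logarithmic Mahler measure. -/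
open MeasureTheory
open scoped Classical
open Complex Metric Filter Topology
open scoped ENNReal
set_option maxHeartbeats 1000000

noncomputable def Complex.abs : AbsoluteValue ℂ ℝ where
  toFun z := ‖z‖
  map_mul' := norm_mul
  nonneg' := norm_nonneg
  eq_zero' _ := norm_eq_zero
  add_le' := norm_add_le

lemma Complex.abs_apply' (z : ℂ) : Complex.abs z = ‖z‖ := rfl

lemma Complex.norm_eq_abs (z : ℂ) : ‖z‖ = Complex.abs z := rfl

@[simp] lemma Complex.abs_exp (z : ℂ) : Complex.abs (Complex.exp z) = Real.exp z.re :=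
  Complex.norm_exp z

lemma Complex.re_le_abs (z : ℂ) : z.re ≤ Complex.abs z := Complex.re_le_norm z

@[simp] lemma Complex.abs_conj (z : ℂ) : Complex.abs ((starRingEnd ℂ) z) = Complex.abs z :=
  Complex.norm_conj z

lemma Complex.normSq_eq_abs (z : ℂ) : Complex.normSq z = Complex.abs z ^ 2 :=
  Complex.normSq_eq_norm_sq z

lemma Complex.continuous_abs : Continuous (fun z : ℂ => Complex.abs z) := continuous_norm

@[simp] lemma Complex.abs_ofReal (r : ℝ) : Complex.abs (r : ℂ) = |r| := Complex.norm_real r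

lemma abs_circleMap_zero (R θ : ℝ) : Complex.abs (circleMap 0 R θ) = |R| :=
  norm_circleMap_zero R θ

noncomputable def ee (θ : ℝ) : ℂ := Complex.exp (2 * Real.pi * Complex.I * θ)

lemma continuous_ee : Continuous ee := by
  unfold ee; fun_prop

lemma abs_ee (θ : ℝ) : Complex.abs (ee θ) = 1 := by
  rw [ee, Complex.abs_exp]
  simp

lemma ee_eq_circleMap (θ : ℝ) : ee θ = circleMap 0 1 (2 * Real.pi * θ) := by
  rw [ee, circleMap_zero]
  push_cast
  ring_nf

lemma core (a : ℂ) (ha : Complex.abs a < 1) :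
    (∫ θ in (0:ℝ)..1, Real.log (Complex.abs (1 - a * ee θ))) = 0 := by
  set g : ℂ → ℂ := fun z => Complex.log (1 - a * z) with hg
  have hslit : ∀ z ∈ closedBall (0:ℂ) 1, (1 - a * z) ∈ Complex.slitPlane := by
    intro z hz
    rw [mem_closedBall, dist_zero_right] at hz
    rw [Complex.mem_slitPlane_iff]
    left
    have h1 : (1 - a*z).re = 1 - (a*z).re := by simp
    have h2 : (a*z).re ≤ Complex.abs (a*z) := Complex.re_le_abs _
    have h3 : Complex.abs (a*z) < 1 := by
      rw [map_mul]
      calc Complex.abs a * Complex.abs z ≤ Complex.abs a * 1 := by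
            exact mul_le_mul_of_nonneg_left (by simpa [Complex.abs_apply'] using hz) (Complex.abs.nonneg a)
        _ < 1 := by simpa using ha
    linarith
  have hdiff : ∀ z ∈ closedBall (0:ℂ) 1, DifferentiableAt ℂ g z := by
    intro z hz
    exact (Complex.differentiableAt_log (hslit z hz)).comp (f := fun z : ℂ => 1 - a * z) z
      (by fun_prop)
  have key := Complex.two_pi_I_inv_smul_circleIntegral_sub_inv_smul_of_differentiable_on_off_countable
    (s := ∅) Set.countable_empty (mem_ball_self one_pos) (f := g) (c := 0) (R := 1)
    (fun z hz => (hdiff z hz).continuousAt.continuousWithinAt)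
    (fun z hz => hdiff z (ball_subset_closedBall hz.1))
  have hg0 : g 0 = 0 := by simp [hg]
  rw [hg0, smul_eq_zero] at key
  have h2pi : ((2 * Real.pi * Complex.I : ℂ))⁻¹ ≠ 0 := by
    simp [Real.pi_ne_zero, Complex.I_ne_zero]
  have hoint : (∮ z in C((0:ℂ), 1), (z - 0)⁻¹ • g z) = 0 := key.resolve_left h2pi
  -- unfold the circle integral
  have hcont : Continuous fun t : ℝ => g (circleMap 0 1 t) := by
    rw [continuous_iff_continuousAt]
    intro t
    exact ((hdiff _ (circleMap_mem_closedBall 0 zero_le_one t)).continuousAt).comp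
      (differentiable_circleMap 0 1 t).continuousAt
  have hunf : (∮ z in C((0:ℂ), 1), (z - 0)⁻¹ • g z)
      = Complex.I * ∫ t in (0:ℝ)..(2*Real.pi), g (circleMap 0 1 t) := by
    rw [circleIntegral]
    rw [← intervalIntegral.integral_const_mul]
    apply intervalIntegral.integral_congr
    intro t _
    have hne : circleMap 0 1 t ≠ 0 := by
      intro h
      have := abs_circleMap_zero 1 t
      rw [h] at this
      simp at this
    simp only [deriv_circleMap, sub_zero, smul_eq_mul]
    field_simp
  rw [hunf, mul_eq_zero] at hoint
  have hint0 : (∫ t in (0:ℝ)..(2*Real.pi), g (circleMap 0 1 t)) = 0 :=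
    hoint.resolve_left Complex.I_ne_zero
  -- take real parts
  have hre : (∫ t in (0:ℝ)..(2*Real.pi), Real.log (Complex.abs (1 - a * circleMap 0 1 t))) = 0 := by
    have hint : IntervalIntegrable (fun t => g (circleMap 0 1 t)) volume 0 (2*Real.pi) :=
      hcont.intervalIntegrable _ _
    have := Complex.reCLM.intervalIntegral_comp_comm hint
    rw [hint0] at this
    simpa [Complex.log_re, hg, Complex.abs_apply'] using this
  -- change variables
  have h2 := intervalIntegral.integral_comp_mul_left (a := (0:ℝ)) (b := (1:ℝ))
    (fun t => Real.log (Complex.abs (1 - a * circleMap 0 1 t))) (c := 2*Real.pi)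
    (by positivity)
  rw [mul_zero, mul_one, hre, smul_zero] at h2
  refine Eq.trans ?_ h2
  apply intervalIntegral.integral_congr
  intro θ _
  simp only [ee_eq_circleMap θ]

lemma core_integrable (a : ℂ) (ha : Complex.abs a < 1) :
    IntervalIntegrable (fun θ => Real.log (Complex.abs (1 - a * ee θ))) volume 0 1 := by
  apply Continuous.intervalIntegrable
  rw [continuous_iff_continuousAt]
  intro θ
  have hne : (1 - a * ee θ) ≠ 0 := by
    intro h
    have h1 : Complex.abs (a * ee θ) = 1 := by
      have : a * ee θ = 1 := by linear_combination -h
      rw [this]; simp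
    rw [map_mul, abs_ee, mul_one] at h1
    exact absurd h1 (ne_of_lt ha)
  have hc : ContinuousAt (fun θ => (1 : ℂ) - a * ee θ) θ := by
    exact (continuous_const.sub (continuous_const.mul continuous_ee)).continuousAt
  exact (Real.continuousAt_log (by simpa [Complex.abs.ne_zero_iff] using hne)).comp
    (Complex.continuous_abs.continuousAt.comp hc)


lemma abs_ee_sub (α : ℂ) (θ : ℝ) :
    Complex.abs (ee θ - α) = Complex.abs (1 - (starRingEnd ℂ) α * ee θ) := by
  have h1 : Complex.abs (ee θ - α) = Complex.abs (ee θ) * Complex.abs ((starRingEnd ℂ) (ee θ - α)) := by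
    rw [Complex.abs_conj, abs_ee, one_mul]
  rw [h1, ← map_mul]
  congr 1
  have h2 : ee θ * (starRingEnd ℂ) (ee θ) = 1 := by
    rw [Complex.mul_conj]
    norm_cast
    rw [Complex.normSq_eq_abs, abs_ee]; norm_num
  rw [map_sub, mul_sub, h2]
  ring

lemma loghelp {x : ℝ} (hx0 : 0 ≤ x) (hx : x ≤ 2) : Real.log x ≤ Real.log 2 := by
  rcases eq_or_lt_of_le hx0 with h | h
  · rw [← h, Real.log_zero]
    exact Real.log_nonneg one_le_two
  · exact Real.log_le_log h hx

lemma one_sub_pos_of_abs_lt {a : ℂ} (ha : Complex.abs a < 1) (θ : ℝ) :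
    0 < Complex.abs (1 - a * ee θ) := by
  have h : Complex.abs (a * ee θ) < 1 := by rw [map_mul, abs_ee, mul_one]; exact ha
  have : (1:ℝ) - Complex.abs (a * ee θ) ≤ Complex.abs (1 - a * ee θ) := by
    simpa [Complex.norm_eq_abs] using norm_sub_norm_le (1:ℂ) (a * ee θ)
  linarith

lemma abs_one_sub_le (a : ℂ) (ha : Complex.abs a ≤ 1) (θ : ℝ) :
    Complex.abs (1 - a * ee θ) ≤ 2 := by
  have h : Complex.abs (a * ee θ) ≤ 1 := by rw [map_mul, abs_ee, mul_one]; exact ha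
  have : Complex.abs (1 - a * ee θ) ≤ 1 + Complex.abs (a * ee θ) := by
    simpa [Complex.norm_eq_abs] using norm_sub_le (1:ℂ) (a * ee θ)
  linarith

lemma big (α : ℂ) (hα : 1 < Complex.abs α) :
    IntervalIntegrable (fun θ => Real.log (Complex.abs (ee θ - α))) volume 0 1 ∧
    (∫ θ in (0:ℝ)..1, Real.log (Complex.abs (ee θ - α))) = Real.log (Complex.abs α) := by
  have hα0 : α ≠ 0 := by
    intro h; rw [h] at hα; simp at hα; linarith
  have hainv : Complex.abs α⁻¹ < 1 := by
    rw [map_inv₀]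
    rw [inv_lt_one_iff₀]
    right; exact hα
  have hid : ∀ θ, Real.log (Complex.abs (ee θ - α))
      = Real.log (Complex.abs α) + Real.log (Complex.abs (1 - α⁻¹ * ee θ)) := by
    intro θ
    have h1 : ee θ - α = -α * (1 - α⁻¹ * ee θ) := by
      field_simp
      ring
    rw [h1, map_mul, map_neg_eq_map, Real.log_mul (Complex.abs.ne_zero hα0)
      (ne_of_gt (one_sub_pos_of_abs_lt hainv θ))]
  constructor
  · simp only [hid]
    exact (intervalIntegrable_const).add (core_integrable _ hainv)
  · simp only [hid]
    rw [intervalIntegral.integral_add intervalIntegrable_const (core_integrable _ hainv),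
      core _ hainv, add_zero, intervalIntegral.integral_const]
    simp

lemma countable_ee_eq (c : ℂ) : Set.Countable {θ : ℝ | ee θ = c} := by
  rcases Set.eq_empty_or_nonempty {θ : ℝ | ee θ = c} with h | ⟨θ₀, hθ₀⟩
  · rw [h]; exact Set.countable_empty
  · have hsub : {θ : ℝ | ee θ = c} ⊆ Set.range (fun n : ℤ => θ₀ + n) := by
      intro θ hθ'
      have hθ : ee θ = c := hθ'
      have hθ₀ : ee θ₀ = c := hθ₀
      have h1 : Complex.exp (2 * Real.pi * Complex.I * θ - 2 * Real.pi * Complex.I * θ₀) = 1 := by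
        rw [Complex.exp_sub]
        rw [ee] at hθ hθ₀
        rw [hθ, hθ₀, div_self (hθ ▸ Complex.exp_ne_zero _)]
      rw [Complex.exp_eq_one_iff] at h1
      obtain ⟨n, hn⟩ := h1
      refine ⟨n, ?_⟩
      show θ₀ + (n:ℝ) = θ
      have hpi : (2 * Real.pi * Complex.I : ℂ) ≠ 0 := by
        simp [Real.pi_ne_zero, Complex.I_ne_zero]
      have : (θ : ℂ) - θ₀ = n := by
        have : 2 * Real.pi * Complex.I * θ - 2 * Real.pi * Complex.I * θ₀
            = 2 * Real.pi * Complex.I * ((θ:ℂ) - θ₀) := by ring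
        rw [this] at hn
        have hn2 : (n : ℂ) * (2 * ↑Real.pi * Complex.I) = 2 * ↑Real.pi * Complex.I * (n:ℂ) := by ring
        rw [hn2] at hn
        exact mul_left_cancel₀ hpi hn
      have := congrArg Complex.re this
      simp at this
      linarith
    exact (Set.countable_range _).mono hsub


lemma small' (a : ℂ) (ha : Complex.abs a ≤ 1) :
    IntervalIntegrable (fun θ => Real.log (Complex.abs (1 - a * ee θ))) volume 0 1 ∧
    0 ≤ ∫ θ in (0:ℝ)..1, Real.log (Complex.abs (1 - a * ee θ)) := by
  set μ := volume.restrict (Set.Ioc (0:ℝ) 1) with hμ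
  have hμfin : IsFiniteMeasure μ := by
    constructor
    rw [hμ, Measure.restrict_apply_univ]
    exact measure_Ioc_lt_top
  have hμuniv : (μ Set.univ).toReal = 1 := by
    rw [hμ, Measure.restrict_apply_univ, Real.volume_Ioc]
    norm_num
  set f : ℝ → ℝ := fun θ => Real.log (Complex.abs (1 - a * ee θ)) with hf
  have hfm : Measurable f :=
    Real.measurable_log.comp
      ((Complex.continuous_abs.comp
        (continuous_const.sub (continuous_const.mul continuous_ee))).measurable)
  set r : ℕ → ℝ := fun k => 1 - 1/(k+2) with hr
  have hr0 : ∀ k, 0 ≤ r k := by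
    intro k
    have : 1/((k:ℝ)+2) ≤ 1 := by
      rw [div_le_one (by positivity)]
      linarith [Nat.cast_nonneg (α := ℝ) k]
    simp only [hr]; linarith
  have hr1 : ∀ k, r k < 1 := by
    intro k
    have : 0 < 1/((k:ℝ)+2) := by positivity
    simp only [hr]; linarith
  have habs : ∀ k, Complex.abs ((r k : ℂ) * a) < 1 := by
    intro k
    rw [map_mul, Complex.abs_ofReal, _root_.abs_of_nonneg (hr0 k)]
    calc r k * Complex.abs a ≤ r k * 1 := by
          exact mul_le_mul_of_nonneg_left ha (hr0 k)
      _ < 1 := by rw [mul_one]; exact hr1 k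
  set F : ℕ → ℝ → ℝ := fun k θ => Real.log (Complex.abs (1 - (r k : ℂ) * a * ee θ)) with hF
  have hFcont : ∀ k, Continuous (F k) := by
    intro k
    rw [continuous_iff_continuousAt]
    intro θ
    have h3 : Continuous (fun θ : ℝ => Complex.abs ((1:ℂ) - (r k : ℂ) * a * ee θ)) :=
      Complex.continuous_abs.comp' (continuous_const.sub (continuous_const.mul continuous_ee))
    exact ContinuousAt.comp (f := fun θ : ℝ => Complex.abs ((1:ℂ) - (r k : ℂ) * a * ee θ))
      (Real.continuousAt_log (ne_of_gt (one_sub_pos_of_abs_lt (habs k) θ))) h3.continuousAt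
  have hFint0 : ∀ k, (∫ θ, F k θ ∂μ) = 0 := by
    intro k
    have := core _ (habs k)
    rwa [intervalIntegral.integral_of_le zero_le_one] at this
  have hFbd : ∀ k θ, F k θ ≤ Real.log 2 := fun k θ =>
    loghelp (Complex.abs.nonneg _) (abs_one_sub_le _ (le_of_lt (habs k)) θ)
  have hfbd : ∀ θ, f θ ≤ Real.log 2 := fun θ =>
    loghelp (Complex.abs.nonneg _) (abs_one_sub_le a ha θ)
  -- a.e. convergence
  have hrlim : Tendsto (fun k : ℕ => r k) atTop (𝓝 1) := by
    have h1 : Tendsto (fun k : ℕ => ((k:ℝ)+2)) atTop atTop :=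
      tendsto_natCast_atTop_atTop.atTop_add tendsto_const_nhds
    have h2 : Tendsto (fun k : ℕ => 1/((k:ℝ)+2)) atTop (𝓝 0) := by
      simpa [one_div, Pi.inv_def] using h1.inv_tendsto_atTop
    have h3 := tendsto_const_nhds (α := ℕ) (x := (1:ℝ)) |>.sub h2
    rw [sub_zero] at h3
    simp only [hr]
    exact h3
  have hae : ∀ᵐ θ ∂μ, a * ee θ ≠ 1 := by
    have hvol : volume {θ : ℝ | a * ee θ = 1} = 0 := by
      apply Set.Countable.measure_zero
      rcases eq_or_ne a 0 with h | h
      · simp [h]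
      · have : {θ : ℝ | a * ee θ = 1} ⊆ {θ : ℝ | ee θ = a⁻¹} := by
          intro θ hθ
          have h4 : a * ee θ = 1 := hθ
          exact eq_inv_of_mul_eq_one_right h4
        exact (countable_ee_eq a⁻¹).mono this
    have h2 : μ {θ : ℝ | a * ee θ = 1} = 0 :=
      le_antisymm (le_trans (Measure.restrict_le_self _) hvol.le) zero_le
    exact ae_iff.2 (by simpa using h2)
  have hconv : ∀ᵐ θ ∂μ, Tendsto (fun k => F k θ) atTop (𝓝 (f θ)) := by
    filter_upwards [hae] with θ hθ
    have hne : (1 : ℂ) - a * ee θ ≠ 0 := fun h => hθ (by linear_combination -h)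
    have hc1 : ContinuousAt (fun t : ℝ => (1:ℂ) - (t:ℂ) * a * ee θ) 1 := by
      apply ContinuousAt.sub continuousAt_const
      exact ((Complex.continuous_ofReal.continuousAt).mul continuousAt_const).mul continuousAt_const
    have hval : (1:ℂ) - ((1:ℝ):ℂ) * a * ee θ = 1 - a * ee θ := by norm_num
    have hc1' : Continuous (fun t : ℝ => (1:ℂ) - (t:ℂ) * a * ee θ) :=
      continuous_const.sub ((Complex.continuous_ofReal.mul continuous_const).mul continuous_const)
    have hc2 : Continuous (fun t : ℝ => Complex.abs ((1:ℂ) - (t:ℂ) * a * ee θ)) :=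
      Complex.continuous_abs.comp' hc1'
    have hcont : ContinuousAt (fun t : ℝ => Real.log (Complex.abs (1 - (t:ℂ) * a * ee θ))) 1 := by
      refine ContinuousAt.comp (f := fun t : ℝ => Complex.abs ((1:ℂ) - (t:ℂ) * a * ee θ))
        (Real.continuousAt_log ?_) hc2.continuousAt
      show Complex.abs ((1:ℂ) - ((1:ℝ):ℂ) * a * ee θ) ≠ 0
      rw [hval]
      simpa [Complex.abs.ne_zero_iff] using hne
    have h6 := hcont.tendsto.comp hrlim
    have h7 : f θ = Real.log (Complex.abs ((1:ℂ) - ((1:ℝ):ℂ) * a * ee θ)) := by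
      rw [hval]
    rw [h7]
    simpa only [Function.comp_def] using h6
  -- Fatou
  set G : ℕ → ℝ → ℝ≥0∞ := fun k θ => ENNReal.ofReal (Real.log 2 - F k θ) with hG
  set g : ℝ → ℝ≥0∞ := fun θ => ENNReal.ofReal (Real.log 2 - f θ) with hg
  have hGm : ∀ k, Measurable (G k) := fun k =>
    ENNReal.measurable_ofReal.comp (measurable_const.sub (hFcont k).measurable)
  have hGint : ∀ k, (∫⁻ θ, G k θ ∂μ) = ENNReal.ofReal (Real.log 2) := by
    intro k
    have hFi : Integrable (F k) μ := by
      rw [hμ]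
      exact ((hFcont k).integrableOn_Ioc : IntegrableOn (F k) (Set.Ioc 0 1) volume)
    have hsub : Integrable (fun θ => Real.log 2 - F k θ) μ := (integrable_const _).sub hFi
    have hnn : 0 ≤ᵐ[μ] fun θ => Real.log 2 - F k θ :=
      ae_of_all _ fun θ => sub_nonneg.2 (hFbd k θ)
    rw [← ofReal_integral_eq_lintegral_ofReal hsub hnn,
      integral_sub (integrable_const _) hFi, hFint0 k, integral_const, measureReal_def, hμuniv, one_smul, sub_zero]
  have hfatou : (∫⁻ θ, g θ ∂μ) ≤ ENNReal.ofReal (Real.log 2) := by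
    have h1 : (∫⁻ θ, g θ ∂μ) = ∫⁻ θ, liminf (fun k => G k θ) atTop ∂μ := by
      apply lintegral_congr_ae
      filter_upwards [hconv] with θ hθ
      have h2 : Tendsto (fun k => G k θ) atTop (𝓝 (g θ)) :=
        (ENNReal.continuous_ofReal.continuousAt).tendsto.comp (tendsto_const_nhds.sub hθ)
      exact h2.liminf_eq.symm
    rw [h1]
    calc (∫⁻ θ, liminf (fun k => G k θ) atTop ∂μ)
        ≤ liminf (fun k => ∫⁻ θ, G k θ ∂μ) atTop := lintegral_liminf_le hGm
      _ = ENNReal.ofReal (Real.log 2) := by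
          simp only [hGint]
          exact liminf_const _
  have hgfin : (∫⁻ θ, g θ ∂μ) < ⊤ := lt_of_le_of_lt hfatou ENNReal.ofReal_lt_top
  have hnnf : 0 ≤ᵐ[μ] fun θ => Real.log 2 - f θ := ae_of_all _ fun θ => sub_nonneg.2 (hfbd θ)
  have hsubm : Integrable (fun θ => Real.log 2 - f θ) μ :=
    ⟨(measurable_const.sub hfm).aestronglyMeasurable,
     (hasFiniteIntegral_iff_ofReal hnnf).2 hgfin⟩
  have hfi : Integrable f μ := by
    have h3 : Integrable (fun θ => Real.log 2 - (Real.log 2 - f θ)) μ :=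
      (integrable_const _).sub hsubm
    simpa using h3
  have hintval : (∫ θ, (Real.log 2 - f θ) ∂μ) ≤ Real.log 2 := by
    have h2 : ENNReal.ofReal (∫ θ, (Real.log 2 - f θ) ∂μ) = ∫⁻ θ, g θ ∂μ :=
      ofReal_integral_eq_lintegral_ofReal hsubm hnnf
    have h3 : ENNReal.ofReal (∫ θ, (Real.log 2 - f θ) ∂μ) ≤ ENNReal.ofReal (Real.log 2) :=
      h2 ▸ hfatou
    exact (ENNReal.ofReal_le_ofReal_iff (Real.log_nonneg one_le_two)).1 h3
  have hintf : 0 ≤ ∫ θ, f θ ∂μ := by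
    have h4 := integral_sub (integrable_const (Real.log 2) (μ := μ)) hfi
    rw [integral_const, measureReal_def, hμuniv, one_smul] at h4
    have h5 : Real.log 2 - ∫ θ, f θ ∂μ ≤ Real.log 2 := h4 ▸ hintval
    linarith
  constructor
  · rw [intervalIntegrable_iff, Set.uIoc_of_le zero_le_one]
    exact hfi
  · rw [intervalIntegral.integral_of_le zero_le_one]
    exact hintf


lemma rootBound (α : ℂ) :
    IntervalIntegrable (fun θ => Real.log (Complex.abs (ee θ - α))) volume 0 1 ∧
    max 0 (Real.log (Complex.abs α)) ≤ ∫ θ in (0:ℝ)..1, Real.log (Complex.abs (ee θ - α)) := by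
  rcases le_or_gt (Complex.abs α) 1 with h | h
  · have hs := small' ((starRingEnd ℂ) α) (by rwa [Complex.abs_conj])
    have heq : (fun θ => Real.log (Complex.abs (ee θ - α)))
        = fun θ => Real.log (Complex.abs (1 - (starRingEnd ℂ) α * ee θ)) :=
      funext fun θ => by rw [abs_ee_sub]
    rw [heq, max_eq_left (Real.log_nonpos (Complex.abs.nonneg _) h)]
    exact hs
  · obtain ⟨h1, h2⟩ := big α h
    refine ⟨h1, ?_⟩
    rw [h2, max_eq_right (Real.log_nonneg h.le)]

lemma log_multiset_prod (s : Multiset ℝ) (h : ∀ x ∈ s, x ≠ 0) :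
    Real.log s.prod = (s.map Real.log).sum := by
  induction s using Multiset.induction_on with
  | empty => simp
  | cons a s ih =>
    simp only [Multiset.prod_cons, Multiset.map_cons, Multiset.sum_cons]
    have hs : s.prod ≠ 0 := Multiset.prod_ne_zero fun h0 => h 0 (Multiset.mem_cons_of_mem h0) rfl
    rw [Real.log_mul (h a (Multiset.mem_cons_self a s)) hs,
      ih fun x hx => h x (Multiset.mem_cons_of_mem hx)]

lemma sumIntegrable (s : Multiset ℂ) :
    IntervalIntegrable (fun θ => (s.map (fun α => Real.log (Complex.abs (ee θ - α)))).sum) volume 0 1 ∧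
    (s.map (fun α => max 0 (Real.log (Complex.abs α)))).sum ≤
      ∫ θ in (0:ℝ)..1, (s.map (fun α => Real.log (Complex.abs (ee θ - α)))).sum := by
  induction s using Multiset.induction_on with
  | empty => simp [intervalIntegrable_const]
  | cons α s ih =>
    obtain ⟨ih1, ih2⟩ := ih
    obtain ⟨h1, h2⟩ := rootBound α
    constructor
    · simp only [Multiset.map_cons, Multiset.sum_cons]
      exact h1.add ih1
    · simp only [Multiset.map_cons, Multiset.sum_cons]
      rw [intervalIntegral.integral_add h1 ih1]
      exact add_le_add h2 ih2

lemma sum_filter_le (s : Multiset ℂ) (p : ℂ → Prop) [DecidablePred p] (c : ℝ) (hc : 0 ≤ c)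
    (f : ℂ → ℝ) :
    (∀ α ∈ s, 0 ≤ f α ∧ (p α → c ≤ f α)) →
    c * ((s.filter p).card : ℝ) ≤ (s.map f).sum := by
  induction s using Multiset.induction_on with
  | empty => simp
  | cons α s ih =>
    intro h
    have hα := h α (Multiset.mem_cons_self α s)
    have hrest := ih fun x hx => h x (Multiset.mem_cons_of_mem hx)
    simp only [Multiset.map_cons, Multiset.sum_cons]
    by_cases hp : p α
    · rw [Multiset.filter_cons_of_pos _ hp, Multiset.card_cons]
      push_cast
      have := hα.2 hp
      nlinarith [hrest]
    · rw [Multiset.filter_cons_of_neg _ hp]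
      linarith [hrest, hα.1]

theorem stmt10 (P : Polynomial ℂ) (n : ℕ) (hdeg : P.natDegree = n)
    (h0 : P.eval 0 ≠ 0) (ρ : ℝ) (hρ0 : 0 < ρ) (hρ1 : ρ < 1) :
    ((P.roots.filter (fun z => ‖z‖ ≤ ρ ∨ 1/ρ ≤ ‖z‖)).card : ℝ)
      ≤ (2 / (1 - ρ)) *
        ∫ θ in (0:ℝ)..1,
          Real.log (‖P.eval (Complex.exp (2 * Real.pi * Complex.I * (θ:ℂ)))‖ /
            Real.sqrt (‖P.coeff 0 * P.leadingCoeff‖)) := by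
  show ((P.roots.filter (fun z => Complex.abs z ≤ ρ ∨ 1/ρ ≤ Complex.abs z)).card : ℝ)
      ≤ (2 / (1 - ρ)) *
        ∫ θ in (0:ℝ)..1,
          Real.log (Complex.abs (P.eval (ee θ)) /
            Real.sqrt (Complex.abs (P.coeff 0 * P.leadingCoeff)))
  have hPne : P ≠ 0 := fun h => h0 (by simp [h])
  have hc : P.leadingCoeff ≠ 0 := Polynomial.leadingCoeff_ne_zero.2 hPne
  have hfact := Polynomial.Splits.eq_prod_roots (IsAlgClosed.splits P)
  set s := P.roots with hs
  set c := P.leadingCoeff with hcdef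
  have hroots0 : ∀ α ∈ s, α ≠ 0 := by
    intro α hα h
    apply h0
    have hr := Polynomial.isRoot_of_mem_roots hα
    rwa [h] at hr
  have habs_eval : ∀ z : ℂ, Complex.abs (P.eval z)
      = Complex.abs c * (s.map (fun α => Complex.abs (z - α))).prod := by
    intro z
    conv_lhs => rw [hfact]
    rw [Polynomial.eval_mul, Polynomial.eval_C, Polynomial.eval_multiset_prod, map_mul,
      map_multiset_prod, Multiset.map_map, Multiset.map_map]
    exact congrArg (Complex.abs c * ·) (congrArg Multiset.prod
      (Multiset.map_congr rfl (fun α _ => by simp)))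
  have hc0ne : P.coeff 0 ≠ 0 := by
    rwa [Polynomial.coeff_zero_eq_eval_zero]
  have hc0 : Complex.abs (P.coeff 0) = Complex.abs c * (s.map (fun α => Complex.abs α)).prod := by
    rw [Polynomial.coeff_zero_eq_eval_zero, habs_eval 0]
    exact congrArg (Complex.abs c * ·) (congrArg Multiset.prod
      (Multiset.map_congr rfl (fun α _ => by simp)))
  set K := Real.sqrt (Complex.abs (P.coeff 0 * P.leadingCoeff)) with hK
  have habs_pos : ∀ α ∈ s, (0:ℝ) < Complex.abs α := fun α hα =>
    Complex.abs.pos (hroots0 α hα)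
  have hprod_ne : (s.map (fun α => Complex.abs α)).prod ≠ 0 := by
    apply Multiset.prod_ne_zero
    intro h
    obtain ⟨α, hα, habs0⟩ := Multiset.mem_map.1 h
    exact (habs_pos α hα).ne' habs0
  have hKval : Real.log K = Real.log (Complex.abs c)
      + (1/2) * (s.map (fun α => Real.log (Complex.abs α))).sum := by
    rw [hK, Real.log_sqrt (Complex.abs.nonneg _), map_mul,
      Real.log_mul (Complex.abs.ne_zero hc0ne) (Complex.abs.ne_zero hc), hc0,
      Real.log_mul (Complex.abs.ne_zero hc) hprod_ne,
      log_multiset_prod _ (by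
        intro x hx
        obtain ⟨α, hα, rfl⟩ := Multiset.mem_map.1 hx
        exact (habs_pos α hα).ne'), Multiset.map_map]
    have : Multiset.map (Real.log ∘ fun α => Complex.abs α) s
        = Multiset.map (fun α => Real.log (Complex.abs α)) s := Multiset.map_congr rfl fun _ _ => rfl
    rw [this]
    ring
  have hKpos : 0 < K := Real.sqrt_pos.2 (by
    rw [map_mul]
    exact mul_pos (Complex.abs.pos hc0ne) (Complex.abs.pos hc))
  -- a.e. rewrite of the integrand
  have hNc : Set.Countable {θ : ℝ | ∃ α ∈ s, ee θ = α} := by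
    have hsub : {θ : ℝ | ∃ α ∈ s, ee θ = α} ⊆ ⋃ α ∈ s.toFinset, {θ : ℝ | ee θ = α} := by
      rintro θ ⟨α, hα, h⟩
      exact Set.mem_biUnion (Multiset.mem_toFinset.2 hα) h
    exact (Set.Countable.biUnion s.toFinset.countable_toSet
      (fun α _ => countable_ee_eq α)).mono hsub
  have hae : ∀ᵐ θ : ℝ, ∀ α ∈ s, ee θ ≠ α := by
    have := hNc.measure_zero volume
    rw [measure_eq_zero_iff_ae_notMem] at this
    filter_upwards [this] with θ hθ α hα h
    exact hθ ⟨α, hα, h⟩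
  have hintegral_eq : (∫ θ in (0:ℝ)..1,
        Real.log (Complex.abs (P.eval (ee θ)) / K))
      = (Real.log (Complex.abs c) - Real.log K)
        + ∫ θ in (0:ℝ)..1, (s.map (fun α => Real.log (Complex.abs (ee θ - α)))).sum := by
    have hconst : (Real.log (Complex.abs c) - Real.log K)
        = ∫ _ in (0:ℝ)..1, (Real.log (Complex.abs c) - Real.log K) := by simp
    rw [hconst, ← intervalIntegral.integral_add intervalIntegrable_const (sumIntegrable s).1]
    apply intervalIntegral.integral_congr_ae
    filter_upwards [hae] with θ hθ _
    have hfac_ne : ∀ x ∈ s.map (fun α => Complex.abs (ee θ - α)), x ≠ 0 := by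
      intro x hx
      obtain ⟨α, hα, rfl⟩ := Multiset.mem_map.1 hx
      exact Complex.abs.ne_zero (sub_ne_zero.2 (hθ α hα))
    have hev_ne : Complex.abs (P.eval (ee θ)) ≠ 0 := by
      rw [habs_eval]
      exact mul_ne_zero (Complex.abs.ne_zero hc) (Multiset.prod_ne_zero (fun h =>
        hfac_ne 0 h rfl))
    rw [Real.log_div hev_ne hKpos.ne', habs_eval,
      Real.log_mul (Complex.abs.ne_zero hc) (Multiset.prod_ne_zero (fun h => hfac_ne 0 h rfl)),
      log_multiset_prod _ hfac_ne, Multiset.map_map]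
    have hmm : Multiset.map (Real.log ∘ fun α => Complex.abs (ee θ - α)) s
        = Multiset.map (fun α => Real.log (Complex.abs (ee θ - α))) s :=
      Multiset.map_congr rfl fun _ _ => rfl
    rw [hmm]
    ring
  -- lower bound for the integral
  have hlow : (s.map (fun α => max 0 (Real.log (Complex.abs α))
      - (1/2) * Real.log (Complex.abs α))).sum
      ≤ ∫ θ in (0:ℝ)..1, Real.log (Complex.abs (P.eval (ee θ)) / K) := by
    rw [hintegral_eq, hKval]
    have h1 := (sumIntegrable s).2
    have hsplit : (s.map (fun α => max 0 (Real.log (Complex.abs α))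
        - (1/2) * Real.log (Complex.abs α))).sum
        = (s.map (fun α => max 0 (Real.log (Complex.abs α)))).sum
          - (1/2) * (s.map (fun α => Real.log (Complex.abs α))).sum := by
      induction s using Multiset.induction_on with
      | empty => simp
      | cons β t ih =>
        simp only [Multiset.map_cons, Multiset.sum_cons] at *
        rw [ih]
        ring
    rw [hsplit]
    linarith
  -- counting
  have hcount : ((1-ρ)/2) * ((s.filter (fun z => Complex.abs z ≤ ρ ∨ 1/ρ ≤ Complex.abs z)).card : ℝ)
      ≤ (s.map (fun α => max 0 (Real.log (Complex.abs α))
        - (1/2) * Real.log (Complex.abs α))).sum := by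
    apply sum_filter_le _ _ _ (by linarith) _
    intro α hα
    set L := Real.log (Complex.abs α) with hL
    have habsρ : Real.log ρ ≤ ρ - 1 := Real.log_le_sub_one_of_pos hρ0
    constructor
    · rcases le_total L 0 with h | h
      · rw [max_eq_left h]; linarith
      · rw [max_eq_right h]; linarith
    · rintro (h | h)
      · have hLρ : L ≤ Real.log ρ := Real.log_le_log (habs_pos α hα) h
        rw [max_eq_left (by linarith)]
        linarith
      · have h1ρ : (0:ℝ) < 1/ρ := by positivity
        have hLρ : Real.log (1/ρ) ≤ L := Real.log_le_log h1ρ h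
        rw [one_div, Real.log_inv] at hLρ
        rw [max_eq_right (by linarith)]
        linarith
  -- combine
  have hcard_nonneg : (0:ℝ) ≤ ((s.filter (fun z => Complex.abs z ≤ ρ ∨ 1/ρ ≤ Complex.abs z)).card : ℝ) :=
    Nat.cast_nonneg _
  have h1ρ : (0:ℝ) < 1 - ρ := by linarith
  have h2 : ((1-ρ)/2) * ((s.filter (fun z => Complex.abs z ≤ ρ ∨ 1/ρ ≤ Complex.abs z)).card : ℝ)
      ≤ ∫ θ in (0:ℝ)..1, Real.log (Complex.abs (P.eval (ee θ)) / K) :=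
    le_trans hcount hlow
  calc ((s.filter (fun z => Complex.abs z ≤ ρ ∨ 1/ρ ≤ Complex.abs z)).card : ℝ)
      = (2/(1-ρ)) * (((1-ρ)/2) * ((s.filter (fun z => Complex.abs z ≤ ρ ∨ 1/ρ ≤ Complex.abs z)).card : ℝ)) := by
        have h21 : (2/(1-ρ)) * ((1-ρ)/2) = 1 := by field_simp
        rw [← mul_assoc, h21, one_mul]
    _ ≤ (2/(1-ρ)) * ∫ θ in (0:ℝ)..1, Real.log (Complex.abs (P.eval (ee θ)) / K) :=
        mul_le_mul_of_nonneg_left h2 (by positivity)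
end

section
/- Let γ ∈ (0, 1/2] and δ ∈ [0,1), and set Γ = 2·arcsin((γ/2)·√(4−γ²)). Then the number G = 2π/((1+δ)·Γ) satisfies G ≥ (π/(1+δ))·(1/γ)·(1 − ((π−2)/(2π))·γ²)·(1 − γ²/4)^{−1/4}. -/
private lemma aux_u_upper (γ u : ℝ) (hγ2 : γ^2 ≤ 1/4) (hu0 : 0 < u)
    (hu4 : u^4 = 1 - γ^2/4) : u ≤ 1 - γ^2/16 := by
  by_contra h
  push_neg at h
  have h16 : (0:ℝ) ≤ 1 - γ^2/16 := by nlinarith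
  have := pow_lt_pow_left₀ h h16 (n := 4) (by norm_num)
  rw [hu4] at this
  nlinarith [mul_nonneg (sq_nonneg (γ^2/16)) h16, sq_nonneg (γ^2/16),
    sq_nonneg ((γ^2/16)^2)]

set_option maxHeartbeats 1000000 in
private lemma aux_core (γ u d : ℝ) (hγ0 : 0 < γ) (hγ2 : γ^2 ≤ 1/4)
    (hu0 : 0 < u) (hu1 : u ≤ 1) (hu_u : u ≤ 1 - γ^2/16)
    (hd_u : d ≤ 1 - 0.1816 * γ^2) (hd095 : (0.954:ℝ) ≤ d) (hd1 : d ≤ 1) :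
    0 ≤ d^4 - γ^2*u^2*d^2/6 - 5*γ^3*u^3*d/96 - u*d^5 := by
  have hd0 : (0:ℝ) < d := by linarith
  have h16 : (0:ℝ) ≤ 1 - γ^2/16 := by nlinarith
  have s2 : 0.24 * γ^2 ≤ 1 - u * d := by
    have h1 : u * d ≤ (1 - γ^2/16) * (1 - 0.1816 * γ^2) :=
      mul_le_mul hu_u hd_u hd0.le h16
    nlinarith [sq_nonneg γ, hγ2]
  have hd4 : (0.8283:ℝ) ≤ d^4 := by
    nlinarith [sq_nonneg (d - 0.954), sq_nonneg (d^2 - 0.910116)]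
  have h6 : 0.8283 * (0.24 * γ^2) ≤ d^4 * (1 - u * d) :=
    mul_le_mul hd4 s2 (by positivity) (by positivity)
  have hud : u * d ≤ 1 := by nlinarith
  have h7 : γ^2 * u^2 * d^2 ≤ γ^2 * 1 := by
    have h2 : u^2 * d^2 ≤ 1 := by nlinarith [mul_pos hu0 hd0]
    nlinarith [sq_nonneg γ]
  have h8 : γ^3 * u^3 * d ≤ γ^2 * (1/2) := by
    have hu3 : u^3 * d ≤ 1 := by nlinarith [mul_pos (mul_pos hu0 hu0) hu0]
    have hγ3 : γ^3 ≤ γ^2 * (1/2) := by nlinarith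
    nlinarith [mul_pos (mul_pos hγ0 hγ0) hγ0]
  linarith only [h6, h7, h8, sq_nonneg γ, hγ2]

set_option maxHeartbeats 1000000 in
theorem stmt18 (γ δ Γ G : ℝ) (hγ0 : 0 < γ) (hγ : γ ≤ 1/2)
    (hδ0 : 0 ≤ δ) (hδ1 : δ < 1)
    (hΓ : Γ = 2 * Real.arcsin ((γ / 2) * Real.sqrt (4 - γ^2)))
    (hG : G = 2 * Real.pi / ((1 + δ) * Γ)) :
    G ≥ (Real.pi / (1 + δ)) * (1 / γ) *
      (1 - ((Real.pi - 2) / (2 * Real.pi)) * γ^2) * (1 - γ^2/4) ^ (-(1/4) : ℝ) := by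
  have hπ1 : Real.pi > 3.141592 := Real.pi_gt_d6
  have hπ2 : Real.pi < 3.15 := by linarith [Real.pi_lt_d2]
  have hγ2 : γ^2 ≤ 1/4 := by nlinarith
  have hγ20 : 0 < γ^2 := by positivity
  have hb0 : (0:ℝ) < 1 - γ^2/4 := by linarith
  have hb1 : (1:ℝ) - γ^2/4 ≤ 1 := by linarith
  obtain ⟨c, hc⟩ : ∃ c : ℝ, c = (Real.pi - 2) / (2 * Real.pi) := ⟨_, rfl⟩
  have hπ0 : (0:ℝ) < 2 * Real.pi := by linarith
  have hc1 : 0.1816 ≤ c := by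
    rw [hc, le_div_iff₀ hπ0]; nlinarith
  have hc2 : c ≤ 0.1826 := by
    rw [hc, div_le_iff₀ hπ0]; nlinarith
  obtain ⟨u, hu⟩ : ∃ u : ℝ, u = (1 - γ^2/4) ^ ((1:ℝ)/4) := ⟨_, rfl⟩
  have hu0 : 0 < u := hu ▸ Real.rpow_pos_of_pos hb0 _
  have hu_le1 : u ≤ 1 := hu ▸ Real.rpow_le_one hb0.le hb1 (by norm_num)
  have hu4 : u^4 = 1 - γ^2/4 := by
    rw [hu, ← Real.rpow_natCast ((1 - γ^2/4) ^ ((1:ℝ)/4)) 4, ← Real.rpow_mul hb0.le]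
    norm_num
  have hu2sq : u^2 = Real.sqrt (1 - γ^2/4) := by
    rw [hu, ← Real.rpow_natCast ((1 - γ^2/4) ^ ((1:ℝ)/4)) 2, ← Real.rpow_mul hb0.le,
      Real.sqrt_eq_rpow]
    norm_num
  have hu_u : u ≤ 1 - γ^2/16 := aux_u_upper γ u hγ2 hu0 hu4
  have hsq4 : Real.sqrt (4 - γ^2) = 2 * Real.sqrt (1 - γ^2/4) := by
    rw [show (4:ℝ) - γ^2 = 2^2 * (1 - γ^2/4) by ring,
      Real.sqrt_mul (by positivity : (0:ℝ) ≤ 2^2),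
      Real.sqrt_sq (by norm_num : (0:ℝ) ≤ 2)]
  have hx_eq : (γ / 2) * Real.sqrt (4 - γ^2) = γ * u^2 := by
    rw [hsq4, hu2sq]; ring
  obtain ⟨d, hd⟩ : ∃ d : ℝ, d = 1 - c * γ^2 := ⟨_, rfl⟩
  have hd_l : 1 - 0.1826 * γ^2 ≤ d := by
    have := mul_le_mul_of_nonneg_right hc2 hγ20.le
    rw [hd]; linarith
  have hd_u : d ≤ 1 - 0.1816 * γ^2 := by
    have := mul_le_mul_of_nonneg_right hc1 hγ20.le
    rw [hd]; linarith
  have hd095 : (0.954:ℝ) ≤ d := by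
    have := mul_le_mul_of_nonneg_left hγ2 (by norm_num : (0:ℝ) ≤ 0.1826)
    linarith
  have hd0 : 0 < d := by linarith
  have hd_le1 : d ≤ 1 := by nlinarith
  obtain ⟨y, hy⟩ : ∃ y : ℝ, y = γ * u / d := ⟨_, rfl⟩
  have hy0 : 0 < y := by rw [hy]; positivity
  have hy1 : y ≤ 0.53 := by
    rw [hy, div_le_iff₀ hd0]
    have h1 : γ * u ≤ (1/2) * 1 := mul_le_mul hγ hu_le1 hu0.le (by norm_num)
    have h2 : 0.53 * 0.954 ≤ 0.53 * d := by linarith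
    linarith only [h1, h2]
  have hcore := aux_core γ u d hγ0 hγ2 hu0 hu_le1 hu_u hd_u hd095 hd_le1
  have hpoly : γ * u^2 ≤ y - y^3/6 - 5*y^4/96 := by
    have expand : y - y^3/6 - 5*y^4/96
        = (γ*u*d^4 - γ^3*u^3*d^2/6 - 5*γ^4*u^4*d/96) / d^5 := by
      rw [hy]; field_simp
    rw [expand, le_div_iff₀ (by positivity : (0:ℝ) < d^5)]
    have hkey := mul_nonneg (mul_pos hγ0 hu0).le hcore
    linarith only [hkey]
  have hy_abs : |y| ≤ 1 := by rw [abs_of_pos hy0]; linarith only [hy1]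
  have hsb := Real.sin_bound hy_abs
  rw [abs_of_pos hy0, abs_le] at hsb
  have hx_sin : γ * u^2 ≤ Real.sin y := by linarith only [hpoly, hsb.1, mul_le_mul_of_nonneg_left hy1 (pow_pos hy0 4).le, pow_pos hy0 4]
  have hy_pi : y ≤ Real.pi / 2 := by linarith only [hy1, hπ1]
  have hA_le : Real.arcsin ((γ / 2) * Real.sqrt (4 - γ^2)) ≤ y := by
    rw [hx_eq]
    calc Real.arcsin (γ * u^2) ≤ Real.arcsin (Real.sin y) :=
          Real.monotone_arcsin hx_sin
      _ = y := Real.arcsin_sin (by linarith only [hy0, hπ1]) hy_pi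
  have hA0 : 0 < Real.arcsin ((γ / 2) * Real.sqrt (4 - γ^2)) := by
    apply Real.arcsin_pos.2
    rw [hx_eq]; positivity
  obtain ⟨A, hA⟩ : ∃ A : ℝ, A = Real.arcsin ((γ / 2) * Real.sqrt (4 - γ^2)) := ⟨_, rfl⟩
  rw [← hA] at hA_le hA0
  have hrpow : (1 - γ^2/4) ^ (-(1/4) : ℝ) = u⁻¹ := by
    rw [Real.rpow_neg hb0.le, ← hu]
  have h1δ : (0:ℝ) < 1 + δ := by linarith
  rw [hG, hΓ, ← hA, hrpow, ge_iff_le]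
  have R_eq : Real.pi / (1 + δ) * (1 / γ) * (1 - (Real.pi - 2) / (2 * Real.pi) * γ^2) * u⁻¹
      = (Real.pi * d) / ((1 + δ) * (γ * u)) := by
    rw [hd, hc]
    field_simp
    try ring
    try exact Or.inl trivial
  rw [R_eq, div_le_div_iff₀ (by positivity) (by positivity)]
  have hAd : A * d ≤ γ * u := by
    have := mul_le_mul_of_nonneg_right hA_le hd0.le
    rwa [hy, div_mul_cancel₀ _ (ne_of_gt hd0)] at this
  have hint := mul_le_mul_of_nonneg_left hAd
    (by positivity : (0:ℝ) ≤ 2 * Real.pi * (1 + δ))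
  linarith only [hint]
end
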